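/- Coupling barycentre Lipschitz bound: let ρ be a Borel probability measure on ℝ^d with ∫ ‖x‖² dρ < ∞, let σ : ℝ → ℝ be Lipschitz with constant L, and fix R > 0. Then there exists a constant C > 0 (depending only on L, |σ(0)|, R, and ∫‖x‖² dρ) with the following property: for all Borel probability measures μ, ν on ℝ^d × ℝ × ℝ supported in the closed ball of radius R, and every coupling γ of μ and ν (a probability measure on the product whose first marginal is μ and second marginal is ν), the barycentre functions f_μ(x) = ∫ a·σ(⟨w, x⟩ + b) dμ(w, b, a) and f_ν satisfy (∫ |f_μ(x) − f_ν(x)|² dρ(x))^{1/2} ≤ C·(∫ ‖θ − θ'‖² dγ(θ, θ'))^{1/2}. -/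

import Mathlib

open MeasureTheory Real
open scoped RealInnerProductSpace NNReal

section Aux

variable {d : ℕ}

private lemma aux_phi_bound (σ : ℝ → ℝ) (L : ℝ≥0) (hσ : LipschitzWith L σ)
    (R : ℝ) (hR : 0 < R) (x : EuclideanSpace ℝ (Fin d))
    (θ : EuclideanSpace ℝ (Fin d) × ℝ × ℝ) (hθ : ‖θ‖ ≤ R) :
    |θ.2.2 * σ (⟪θ.1, x⟫ + θ.2.1)| ≤ R * (|σ 0| + L * (R * ‖x‖ + R)) := by
  have hw : ‖θ.1‖ ≤ R := (norm_fst_le θ).trans hθ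
  have hb : |θ.2.1| ≤ R := by
    have h1 : ‖θ.2.1‖ ≤ ‖θ.2‖ := norm_fst_le θ.2
    have h2 : ‖θ.2‖ ≤ ‖θ‖ := norm_snd_le θ
    simpa [Real.norm_eq_abs] using (h1.trans (h2.trans hθ))
  have ha : |θ.2.2| ≤ R := by
    have h1 : ‖θ.2.2‖ ≤ ‖θ.2‖ := norm_snd_le θ.2
    have h2 : ‖θ.2‖ ≤ ‖θ‖ := norm_snd_le θ
    simpa [Real.norm_eq_abs] using (h1.trans (h2.trans hθ))
  set u : ℝ := ⟪θ.1, x⟫ + θ.2.1 with hu_def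
  have hu : |u| ≤ R * ‖x‖ + R := by
    refine (abs_add_le _ _).trans (add_le_add ?_ hb)
    exact (abs_real_inner_le_norm _ _).trans
      (mul_le_mul_of_nonneg_right hw (norm_nonneg x))
  have hσlip : |σ u - σ 0| ≤ L * |u| := by
    simpa [Real.dist_eq] using hσ.dist_le_mul u 0
  have hσu : |σ u| ≤ |σ 0| + (L : ℝ) * (R * ‖x‖ + R) := by
    have h1 : |σ u| ≤ |σ u - σ 0| + |σ 0| := by
      simpa using abs_add_le (σ u - σ 0) (σ 0)
    have h2 : (L : ℝ) * |u| ≤ (L : ℝ) * (R * ‖x‖ + R) :=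
      mul_le_mul_of_nonneg_left hu L.coe_nonneg
    linarith
  rw [abs_mul]
  exact mul_le_mul ha hσu (abs_nonneg _) hR.le

private lemma aux_phi_lip (σ : ℝ → ℝ) (L : ℝ≥0) (hσ : LipschitzWith L σ)
    (R : ℝ) (hR : 0 < R) (x : EuclideanSpace ℝ (Fin d))
    (θ θ' : EuclideanSpace ℝ (Fin d) × ℝ × ℝ) (hθ : ‖θ‖ ≤ R) (hθ' : ‖θ'‖ ≤ R) :
    |θ.2.2 * σ (⟪θ.1, x⟫ + θ.2.1) - θ'.2.2 * σ (⟪θ'.1, x⟫ + θ'.2.1)| ≤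
      (2 * R * L + |σ 0| + 1) * (1 + ‖x‖) * ‖θ - θ'‖ := by
  set D : ℝ := ‖θ - θ'‖ with hD_def
  set t : ℝ := ‖x‖ with ht_def
  have hD : 0 ≤ D := norm_nonneg _
  have ht : 0 ≤ t := norm_nonneg _
  have hw : ‖θ.1 - θ'.1‖ ≤ D := by
    simpa using norm_fst_le (θ - θ')
  have hb : |θ.2.1 - θ'.2.1| ≤ D := by
    have h1 : ‖(θ - θ').2.1‖ ≤ ‖(θ - θ').2‖ := norm_fst_le (θ - θ').2
    have h2 : ‖(θ - θ').2‖ ≤ ‖θ - θ'‖ := norm_snd_le (θ - θ')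
    simpa [Real.norm_eq_abs] using h1.trans h2
  have ha : |θ.2.2 - θ'.2.2| ≤ D := by
    have h1 : ‖(θ - θ').2.2‖ ≤ ‖(θ - θ').2‖ := norm_snd_le (θ - θ').2
    have h2 : ‖(θ - θ').2‖ ≤ ‖θ - θ'‖ := norm_snd_le (θ - θ')
    simpa [Real.norm_eq_abs] using h1.trans h2
  have hA : |θ.2.2| ≤ R := by
    have h1 : ‖θ.2.2‖ ≤ ‖θ.2‖ := norm_snd_le θ.2
    have h2 : ‖θ.2‖ ≤ ‖θ‖ := norm_snd_le θ
    simpa [Real.norm_eq_abs] using (h1.trans (h2.trans hθ))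
  have hw' : ‖θ'.1‖ ≤ R := (norm_fst_le θ').trans hθ'
  have hb' : |θ'.2.1| ≤ R := by
    have h1 : ‖θ'.2.1‖ ≤ ‖θ'.2‖ := norm_fst_le θ'.2
    have h2 : ‖θ'.2‖ ≤ ‖θ'‖ := norm_snd_le θ'
    simpa [Real.norm_eq_abs] using (h1.trans (h2.trans hθ'))
  set u : ℝ := ⟪θ.1, x⟫ + θ.2.1 with hu_def
  set u' : ℝ := ⟪θ'.1, x⟫ + θ'.2.1 with hu'_def
  have hudiff : |u - u'| ≤ D * t + D := by
    have he : u - u' = ⟪θ.1 - θ'.1, x⟫ + (θ.2.1 - θ'.2.1) := by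
      rw [hu_def, hu'_def, inner_sub_left]; ring
    rw [he]
    refine (abs_add_le _ _).trans (add_le_add ?_ hb)
    exact (abs_real_inner_le_norm _ _).trans
      (mul_le_mul_of_nonneg_right hw ht)
  have hσdiff : |σ u - σ u'| ≤ (L : ℝ) * (D * t + D) := by
    have h1 : |σ u - σ u'| ≤ (L : ℝ) * |u - u'| := by
      simpa [Real.dist_eq] using hσ.dist_le_mul u u'
    exact h1.trans (mul_le_mul_of_nonneg_left hudiff L.coe_nonneg)
  have hu' : |u'| ≤ R * t + R := by
    refine (abs_add_le _ _).trans (add_le_add ?_ hb')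
    exact (abs_real_inner_le_norm _ _).trans
      (mul_le_mul_of_nonneg_right hw' ht)
  have hσu' : |σ u'| ≤ |σ 0| + (L : ℝ) * (R * t + R) := by
    have h1 : |σ u'| ≤ |σ u' - σ 0| + |σ 0| := by
      simpa using abs_add_le (σ u' - σ 0) (σ 0)
    have h2 : |σ u' - σ 0| ≤ (L : ℝ) * |u'| := by
      simpa [Real.dist_eq] using hσ.dist_le_mul u' 0
    have h3 : (L : ℝ) * |u'| ≤ (L : ℝ) * (R * t + R) :=
      mul_le_mul_of_nonneg_left hu' L.coe_nonneg
    linarith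
  have hsplit : |θ.2.2 * σ u - θ'.2.2 * σ u'| ≤
      |θ.2.2| * |σ u - σ u'| + |θ.2.2 - θ'.2.2| * |σ u'| := by
    have he : θ.2.2 * σ u - θ'.2.2 * σ u' =
        θ.2.2 * (σ u - σ u') + (θ.2.2 - θ'.2.2) * σ u' := by ring
    rw [he]
    exact (abs_add_le _ _).trans (by rw [abs_mul, abs_mul])
  have p1 : |θ.2.2| * |σ u - σ u'| ≤ R * ((L : ℝ) * (D * t + D)) :=
    mul_le_mul hA hσdiff (abs_nonneg _) hR.le
  have p2 : |θ.2.2 - θ'.2.2| * |σ u'| ≤ D * (|σ 0| + (L : ℝ) * (R * t + R)) :=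
    mul_le_mul ha hσu' (abs_nonneg _) hD
  have hL : (0 : ℝ) ≤ L := L.coe_nonneg
  have hs : (0 : ℝ) ≤ |σ 0| := abs_nonneg _
  nlinarith [mul_nonneg hD ht, mul_nonneg (mul_nonneg hL hD) ht,
    mul_nonneg hs (mul_nonneg hD ht), mul_nonneg hs hD,
    mul_nonneg (mul_nonneg hR.le hL) (mul_nonneg hD ht),
    mul_nonneg (mul_nonneg hR.le hL) hD]

end Aux

/-- Coupling barycentre Lipschitz bound: for parameter measures `μ, ν` supported in the
closed ball of radius `R`, any coupling `γ` of `μ` and `ν`, a Lipschitz activation `σ`,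
and a data law `ρ` with finite second moment, the `L²(ρ)` distance between the barycentre
network functions `f_μ` and `f_ν` is bounded by `C` times the coupling cost
`(∫‖θ − θ'‖² dγ)^{1/2}`. -/
theorem coupling_barycentre_lipschitz
    (d : ℕ) (ρ : Measure (EuclideanSpace ℝ (Fin d))) [IsProbabilityMeasure ρ]
    (hmom : Integrable (fun x => ‖x‖ ^ 2) ρ)
    (σ : ℝ → ℝ) (L : ℝ≥0) (hσ : LipschitzWith L σ)
    (R : ℝ) (hR : 0 < R) :
    ∃ C : ℝ, 0 < C ∧
      ∀ (μ ν : Measure ((EuclideanSpace ℝ (Fin d)) × ℝ × ℝ))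
        (_ : IsProbabilityMeasure μ) (_ : IsProbabilityMeasure ν),
        (∀ᵐ θ ∂μ, θ ∈ Metric.closedBall (0 : (EuclideanSpace ℝ (Fin d)) × ℝ × ℝ) R) →
        (∀ᵐ θ ∂ν, θ ∈ Metric.closedBall (0 : (EuclideanSpace ℝ (Fin d)) × ℝ × ℝ) R) →
        ∀ γ : Measure (((EuclideanSpace ℝ (Fin d)) × ℝ × ℝ) ×
            ((EuclideanSpace ℝ (Fin d)) × ℝ × ℝ)),
          IsProbabilityMeasure γ →
          γ.map Prod.fst = μ → γ.map Prod.snd = ν →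
          (∫ x,
              |(∫ θ, θ.2.2 * σ (⟪θ.1, x⟫ + θ.2.1) ∂μ) -
                (∫ θ, θ.2.2 * σ (⟪θ.1, x⟫ + θ.2.1) ∂ν)| ^ 2 ∂ρ) ^ ((1 : ℝ) / 2) ≤
            C * (∫ p, ‖p.1 - p.2‖ ^ 2 ∂γ) ^ ((1 : ℝ) / 2) := by
  classical
  set K : ℝ := 2 * R * L + |σ 0| + 1 with hK_def
  have hK : 0 < K := by positivity
  set G : EuclideanSpace ℝ (Fin d) → ℝ := fun x => 2 * (1 + ‖x‖ ^ 2) with hG_def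
  have hGint : Integrable G ρ := (((integrable_const (1 : ℝ)).add hmom).const_mul 2)
  set MG : ℝ := ∫ x, G x ∂ρ with hMG_def
  have hMG : 0 < MG := by
    have h2 : (2 : ℝ) ≤ MG := by
      have : ∫ _ : EuclideanSpace ℝ (Fin d), (2 : ℝ) ∂ρ ≤ ∫ x, G x ∂ρ := by
        refine integral_mono (integrable_const 2) hGint fun x => ?_
        have := sq_nonneg ‖x‖
        simp only [hG_def]; nlinarith
      simpa using this
    linarith
  refine ⟨K * Real.sqrt MG, by positivity, ?_⟩
  intro μ ν hμP hνP hμball hνball γ hγP hfst hsnd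
  -- a.e. support facts for γ
  have hγ1 : ∀ᵐ p ∂γ, ‖p.1‖ ≤ R := by
    have h := hμball; rw [← hfst] at h
    have h2 := (ae_map_iff measurable_fst.aemeasurable measurableSet_closedBall).mp h
    filter_upwards [h2] with p hp
    simpa [Metric.mem_closedBall, dist_zero_right] using hp
  have hγ2 : ∀ᵐ p ∂γ, ‖p.2‖ ≤ R := by
    have h := hνball; rw [← hsnd] at h
    have h2 := (ae_map_iff measurable_snd.aemeasurable measurableSet_closedBall).mp h
    filter_upwards [h2] with p hp
    simpa [Metric.mem_closedBall, dist_zero_right] using hp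
  set I : ℝ := ∫ p, ‖p.1 - p.2‖ ∂γ with hI_def
  set B : ℝ := ∫ p, ‖p.1 - p.2‖ ^ 2 ∂γ with hB_def
  have hInonneg : 0 ≤ I := integral_nonneg fun _ => norm_nonneg _
  have hBnonneg : 0 ≤ B := integral_nonneg fun _ => sq_nonneg _
  have hdistmeas : Continuous fun p :
      ((EuclideanSpace ℝ (Fin d)) × ℝ × ℝ) × ((EuclideanSpace ℝ (Fin d)) × ℝ × ℝ) =>
      ‖p.1 - p.2‖ := (continuous_fst.sub continuous_snd).norm
  have hIB : I ^ 2 ≤ B := by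
    have hmem : MemLp (fun p => ‖p.1 - p.2‖) 2 γ := by
      refine MemLp.of_bound hdistmeas.aestronglyMeasurable (2 * R) ?_
      filter_upwards [hγ1, hγ2] with p h1 h2
      have : ‖p.1 - p.2‖ ≤ ‖p.1‖ + ‖p.2‖ := norm_sub_le _ _
      rw [Real.norm_eq_abs, abs_of_nonneg (norm_nonneg _)]
      linarith
    have hv := ProbabilityTheory.variance_nonneg (fun p => ‖p.1 - p.2‖) γ
    rw [ProbabilityTheory.variance_eq_sub hmem] at hv
    simp only [Pi.pow_apply] at hv
    linarith
  -- key pointwise estimate in x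
  have hφcont : ∀ x : EuclideanSpace ℝ (Fin d),
      Continuous (fun θ : (EuclideanSpace ℝ (Fin d)) × ℝ × ℝ =>
        θ.2.2 * σ (⟪θ.1, x⟫ + θ.2.1)) := fun x =>
    (continuous_snd.snd).mul (hσ.continuous.comp
      ((Continuous.inner continuous_fst continuous_const).add continuous_snd.fst))
  have hkey : ∀ x : EuclideanSpace ℝ (Fin d),
      |(∫ θ, θ.2.2 * σ (⟪θ.1, x⟫ + θ.2.1) ∂μ) -
        (∫ θ, θ.2.2 * σ (⟪θ.1, x⟫ + θ.2.1) ∂ν)| ≤ K * (1 + ‖x‖) * I := by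
    intro x
    set φ : (EuclideanSpace ℝ (Fin d)) × ℝ × ℝ → ℝ :=
      fun θ => θ.2.2 * σ (⟪θ.1, x⟫ + θ.2.1) with hφ_def
    set Mx : ℝ := R * (|σ 0| + L * (R * ‖x‖ + R)) with hMx_def
    have hint1 : Integrable (fun p => φ p.1) γ := by
      refine Integrable.mono' (integrable_const Mx)
        ((hφcont x).comp continuous_fst).aestronglyMeasurable ?_
      filter_upwards [hγ1] with p hp
      rw [Real.norm_eq_abs]; exact aux_phi_bound σ L hσ R hR x p.1 hp
    have hint2 : Integrable (fun p => φ p.2) γ := by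
      refine Integrable.mono' (integrable_const Mx)
        ((hφcont x).comp continuous_snd).aestronglyMeasurable ?_
      filter_upwards [hγ2] with p hp
      rw [Real.norm_eq_abs]; exact aux_phi_bound σ L hσ R hR x p.2 hp
    have e1 : ∫ θ, φ θ ∂μ = ∫ p, φ p.1 ∂γ := by
      rw [← hfst, integral_map measurable_fst.aemeasurable
        ((hφcont x).aestronglyMeasurable)]
    have e2 : ∫ θ, φ θ ∂ν = ∫ p, φ p.2 ∂γ := by
      rw [← hsnd, integral_map measurable_snd.aemeasurable
        ((hφcont x).aestronglyMeasurable)]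
    have hdist_int : Integrable (fun p => ‖p.1 - p.2‖) γ := by
      refine Integrable.mono' (integrable_const (2 * R))
        hdistmeas.aestronglyMeasurable ?_
      filter_upwards [hγ1, hγ2] with p h1 h2
      have : ‖p.1 - p.2‖ ≤ ‖p.1‖ + ‖p.2‖ := norm_sub_le _ _
      rw [Real.norm_eq_abs, abs_of_nonneg (norm_nonneg _)]
      linarith
    show |(∫ θ, φ θ ∂μ) - (∫ θ, φ θ ∂ν)| ≤ K * (1 + ‖x‖) * I
    rw [e1, e2, ← integral_sub hint1 hint2]
    have habs : |∫ p, (φ p.1 - φ p.2) ∂γ| ≤ ∫ p, |φ p.1 - φ p.2| ∂γ := by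
      simpa [Real.norm_eq_abs] using
        norm_integral_le_integral_norm (μ := γ) (f := fun p => φ p.1 - φ p.2)
    refine habs.trans ?_
    have hmono : ∫ p, |φ p.1 - φ p.2| ∂γ ≤
        ∫ p, K * (1 + ‖x‖) * ‖p.1 - p.2‖ ∂γ := by
      refine integral_mono_ae ((hint1.sub hint2).abs)
        (hdist_int.const_mul (K * (1 + ‖x‖))) ?_
      filter_upwards [hγ1, hγ2] with p h1 h2
      exact aux_phi_lip σ L hσ R hR x p.1 p.2 h1 h2
    refine hmono.trans_eq ?_
    rw [integral_const_mul]
  -- strong measurability of the barycentre functions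
  have hFcont : Continuous (fun q :
      (EuclideanSpace ℝ (Fin d)) × ((EuclideanSpace ℝ (Fin d)) × ℝ × ℝ) =>
      q.2.2.2 * σ (⟪q.2.1, q.1⟫ + q.2.2.1)) :=
    (continuous_snd.snd.snd).mul (hσ.continuous.comp
      ((Continuous.inner continuous_snd.fst continuous_fst).add continuous_snd.snd.fst))
  have hfμ : StronglyMeasurable (fun x : EuclideanSpace ℝ (Fin d) =>
      ∫ θ, θ.2.2 * σ (⟪θ.1, x⟫ + θ.2.1) ∂μ) :=
    hFcont.stronglyMeasurable.integral_prod_right'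
  have hfν : StronglyMeasurable (fun x : EuclideanSpace ℝ (Fin d) =>
      ∫ θ, θ.2.2 * σ (⟪θ.1, x⟫ + θ.2.1) ∂ν) :=
    hFcont.stronglyMeasurable.integral_prod_right'
  -- integrate the squared pointwise bound
  set A : ℝ := ∫ x,
      |(∫ θ, θ.2.2 * σ (⟪θ.1, x⟫ + θ.2.1) ∂μ) -
        (∫ θ, θ.2.2 * σ (⟪θ.1, x⟫ + θ.2.1) ∂ν)| ^ 2 ∂ρ with hA_def
  have hAnonneg : 0 ≤ A := integral_nonneg fun x => sq_nonneg _
  have hAle : A ≤ K ^ 2 * I ^ 2 * MG := by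
    have hmaj : Integrable (fun x => K ^ 2 * I ^ 2 * G x) ρ := hGint.const_mul _
    have h1 : A ≤ ∫ x, K ^ 2 * I ^ 2 * G x ∂ρ := by
      refine integral_mono_of_nonneg
        (Filter.Eventually.of_forall fun x => sq_nonneg _) hmaj
        (Filter.Eventually.of_forall fun x => ?_)
      have h2 := hkey x
      have h3 : |(∫ θ, θ.2.2 * σ (⟪θ.1, x⟫ + θ.2.1) ∂μ) -
          (∫ θ, θ.2.2 * σ (⟪θ.1, x⟫ + θ.2.1) ∂ν)| ^ 2 ≤
          (K * (1 + ‖x‖) * I) ^ 2 := by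
        exact pow_le_pow_left₀ (abs_nonneg _) h2 2
      refine h3.trans ?_
      have ht : (0 : ℝ) ≤ ‖x‖ := norm_nonneg _
      simp only [hG_def]
      nlinarith [sq_nonneg ((1 : ℝ) - ‖x‖), sq_nonneg (K * I),
        mul_nonneg (sq_nonneg (K * I)) (sq_nonneg ((1 : ℝ) - ‖x‖))]
    calc A ≤ ∫ x, K ^ 2 * I ^ 2 * G x ∂ρ := h1
      _ = K ^ 2 * I ^ 2 * MG := by rw [integral_const_mul]
  have hfinal : A ≤ (K * Real.sqrt MG) ^ 2 * B := by
    have hCsq : (K * Real.sqrt MG) ^ 2 = K ^ 2 * MG := by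
      rw [mul_pow, Real.sq_sqrt hMG.le]
    rw [hCsq]
    have h4 : K ^ 2 * I ^ 2 * MG ≤ K ^ 2 * B * MG := by
      have := mul_le_mul_of_nonneg_left hIB (sq_nonneg K)
      exact mul_le_mul_of_nonneg_right this hMG.le
    calc A ≤ K ^ 2 * I ^ 2 * MG := hAle
      _ ≤ K ^ 2 * B * MG := h4
      _ = K ^ 2 * MG * B := by ring
  -- conclude with rpow monotonicity
  have hrpow := Real.rpow_le_rpow hAnonneg hfinal (by norm_num : (0:ℝ) ≤ 1 / 2)
  calc A ^ ((1:ℝ)/2) ≤ ((K * Real.sqrt MG) ^ 2 * B) ^ ((1:ℝ)/2) := hrpow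
    _ = K * Real.sqrt MG * B ^ ((1:ℝ)/2) := by
        rw [Real.mul_rpow (sq_nonneg _) hBnonneg]
        congr 1
        rw [← Real.rpow_natCast (K * Real.sqrt MG) 2, ← Real.rpow_mul (by positivity)]
        norm_num
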